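/- Let 0 < ε ≤ 1/2, let X ∈ ℝ^{n×d} have full column rank d, let Y ∈ ℝⁿ, and let Π ∈ ℝ^{k×n} be an (ε/3)-subspace embedding for the column space of the augmented matrix [X,Y]. Let γ be a minimizer of β ↦ ‖Xβ − Y‖² and ν a minimizer of β ↦ ‖Π(Xβ − Y)‖². Suppose ‖Xγ‖ ≥ ρ‖Y‖ for some ρ ∈ (0,1]. Then (‖ν‖² + trace((XᵀΠᵀΠX)⁻¹))^{1/2} ≤ (1 + (κ(X)/ρ)·ε) · (‖γ‖² + trace((XᵀX)⁻¹))^{1/2}, where κ(X) = σ_max(X)/σ_min(X). Equivalently, the ℓ₂ Wasserstein weight of the Gaussian measure N(ν, (XᵀΠᵀΠX)⁻¹) is at most (1 + (κ(X)/ρ)·ε) times that of N(γ, (XᵀX)⁻¹). -/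

import Mathlib

open Matrix

noncomputable section

/-- Squared Euclidean norm of a vector. -/
def sqNorm {ι : Type*} [Fintype ι] (v : ι → ℝ) : ℝ := ∑ i, (v i) ^ 2

/-- Euclidean norm of a vector. -/
def eNorm {ι : Type*} [Fintype ι] (v : ι → ℝ) : ℝ := Real.sqrt (sqNorm v)

/-- `P` is an `ε`-subspace embedding for the column space of `A`:
for all `x`, `(1-ε)‖Ax‖² ≤ ‖PAx‖² ≤ (1+ε)‖Ax‖²`. -/
def IsSubspaceEmbedding {K N C : Type*} [Fintype K] [Fintype N] [Fintype C]
    (P : Matrix K N ℝ) (A : Matrix N C ℝ) (ε : ℝ) : Prop :=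
  ∀ x : C → ℝ,
    (1 - ε) * sqNorm (A.mulVec x) ≤ sqNorm ((P * A).mulVec x) ∧
      sqNorm ((P * A).mulVec x) ≤ (1 + ε) * sqNorm (A.mulVec x)

/-- The augmented matrix `[X, Y]` obtained by appending the column `Y` to `X`. -/
def augment {n d : ℕ} (X : Matrix (Fin n) (Fin d) ℝ) (Y : Fin n → ℝ) :
    Matrix (Fin n) (Fin (d + 1)) ℝ :=
  Matrix.of fun i => Fin.snoc (X i) (Y i)

/-- The squared smallest singular value of `M`: `σ_min(M)² = inf_{‖x‖ = 1} ‖Mx‖²`. -/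
def sigMinSq {N C : Type*} [Fintype N] [Fintype C] (M : Matrix N C ℝ) : ℝ :=
  sInf {r : ℝ | ∃ x : C → ℝ, sqNorm x = 1 ∧ r = sqNorm (M.mulVec x)}

/-- The squared largest singular value of `M`: `σ_max(M)² = sup_{‖x‖ = 1} ‖Mx‖²`. -/
def sigMaxSq {N C : Type*} [Fintype N] [Fintype C] (M : Matrix N C ℝ) : ℝ :=
  sSup {r : ℝ | ∃ x : C → ℝ, sqNorm x = 1 ∧ r = sqNorm (M.mulVec x)}

/-- The condition number `κ(M) = σ_max(M) / σ_min(M)`. -/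
def condNum {N C : Type*} [Fintype N] [Fintype C] (M : Matrix N C ℝ) : ℝ :=
  Real.sqrt (sigMaxSq M) / Real.sqrt (sigMinSq M)

namespace Aux

variable {ι κ : Type*} [Fintype ι] [Fintype κ]

lemma sqNorm_nonneg (v : ι → ℝ) : 0 ≤ sqNorm v :=
  Finset.sum_nonneg fun _ _ => sq_nonneg _

lemma sqNorm_eq_dot (v : ι → ℝ) : sqNorm v = v ⬝ᵥ v := by
  simp [sqNorm, dotProduct, sq]

lemma sqNorm_add (u w : ι → ℝ) :
    sqNorm (u + w) = sqNorm u + 2 * (u ⬝ᵥ w) + sqNorm w := by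
  simp only [sqNorm, dotProduct, Pi.add_apply, Finset.mul_sum, ← Finset.sum_add_distrib]
  congr 1; ext i; ring

lemma sqNorm_smul (c : ℝ) (v : ι → ℝ) : sqNorm (c • v) = c ^ 2 * sqNorm v := by
  simp only [sqNorm, Pi.smul_apply, smul_eq_mul, mul_pow, Finset.mul_sum]

lemma sqNorm_neg (v : ι → ℝ) : sqNorm (-v) = sqNorm v := by
  simp [sqNorm]

lemma sqNorm_zero : sqNorm (0 : ι → ℝ) = 0 := by simp [sqNorm]

lemma sqNorm_eq_zero {v : ι → ℝ} (h : sqNorm v = 0) : v = 0 := by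
  funext i
  have := (Finset.sum_eq_zero_iff_of_nonneg (fun i _ => sq_nonneg (v i))).mp h i
    (Finset.mem_univ i)
  exact pow_eq_zero_iff (two_ne_zero) |>.mp this

lemma sqNorm_pos {v : ι → ℝ} (h : v ≠ 0) : 0 < sqNorm v := by
  rcases lt_or_eq_of_le (sqNorm_nonneg v) with h1 | h1
  · exact h1
  · exact absurd (sqNorm_eq_zero h1.symm) h

lemma eNorm_nonneg (v : ι → ℝ) : 0 ≤ eNorm v := Real.sqrt_nonneg _

lemma sq_eNorm (v : ι → ℝ) : eNorm v ^ 2 = sqNorm v := Real.sq_sqrt (sqNorm_nonneg v)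

lemma cauchy (u w : ι → ℝ) : u ⬝ᵥ w ≤ eNorm u * eNorm w := by
  calc u ⬝ᵥ w ≤ |u ⬝ᵥ w| := le_abs_self _
    _ ≤ eNorm u * eNorm w := by
      rw [← Real.sqrt_sq_eq_abs, eNorm, eNorm, ← Real.sqrt_mul (sqNorm_nonneg u)]
      apply Real.sqrt_le_sqrt
      simpa [dotProduct, sqNorm] using Finset.sum_mul_sq_le_sq_mul_sq Finset.univ u w

lemma eNorm_add (u w : ι → ℝ) : eNorm (u + w) ≤ eNorm u + eNorm w := by
  have h1 : eNorm (u + w) ^ 2 ≤ (eNorm u + eNorm w) ^ 2 := by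
    rw [sq_eNorm, sqNorm_add]
    have := cauchy u w
    nlinarith [sq_eNorm u, sq_eNorm w]
  have h2 : 0 ≤ eNorm u + eNorm w := add_nonneg (eNorm_nonneg u) (eNorm_nonneg w)
  nlinarith [eNorm_nonneg (u + w)]

lemma dot_transpose (A : Matrix ι κ ℝ) (v : κ → ℝ) (w : ι → ℝ) :
    v ⬝ᵥ Aᵀ.mulVec w = A.mulVec v ⬝ᵥ w := by
  rw [dotProduct_mulVec, vecMul_transpose]

lemma normal_eq {A : Matrix ι κ ℝ} {Y : ι → ℝ} {g : κ → ℝ}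
    (h : ∀ β : κ → ℝ, sqNorm (A.mulVec g - Y) ≤ sqNorm (A.mulVec β - Y)) (v : κ → ℝ) :
    A.mulVec v ⬝ᵥ (A.mulVec g - Y) = 0 := by
  set a := A.mulVec v ⬝ᵥ (A.mulVec g - Y) with ha
  set b := sqNorm (A.mulVec v) with hb
  have hb0 : 0 ≤ b := Finset.sum_nonneg fun _ _ => sq_nonneg _
  have key : ∀ t : ℝ, 0 ≤ 2 * t * a + t ^ 2 * b := by
    intro t
    have h1 := h (g + t • v)
    have h2 : A.mulVec (g + t • v) - Y = (A.mulVec g - Y) + t • A.mulVec v := by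
      rw [mulVec_add, mulVec_smul]; abel
    have h3 : sqNorm ((A.mulVec g - Y) + t • A.mulVec v)
        = sqNorm (A.mulVec g - Y) + 2 * t * a + t ^ 2 * b := by
      rw [sqNorm_add]
      have hd : (A.mulVec g - Y) ⬝ᵥ (t • A.mulVec v) = t * a := by
        rw [dotProduct_smul, smul_eq_mul, ha, dotProduct_comm]
      have hs : sqNorm (t • A.mulVec v) = t ^ 2 * b := by
        simp only [sqNorm, Pi.smul_apply, smul_eq_mul, mul_pow, Finset.mul_sum, hb]
      rw [hd, hs]; ring
    rw [h2, h3] at h1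
    linarith
  by_contra hne
  have hb1 : (0:ℝ) < b + 1 := by linarith
  have ht : 2 * (-a / (b + 1)) * a + (-a / (b + 1)) ^ 2 * b
      = -(a ^ 2 * (b + 2)) / (b + 1) ^ 2 := by
    field_simp; ring
  have h6 := key (-a / (b + 1)); rw [ht] at h6
  have hne2 : ((b + 1) : ℝ) ^ 2 ≠ 0 := by positivity
  have h8 : -(a ^ 2 * (b + 2)) / (b + 1) ^ 2 * (b + 1) ^ 2 = -(a ^ 2 * (b + 2)) :=
    div_mul_cancel₀ _ hne2
  have h9 : 0 ≤ -(a ^ 2 * (b + 2)) := by rw [← h8]; exact mul_nonneg h6 (sq_nonneg _)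
  have : a ^ 2 > 0 := by positivity
  nlinarith

variable [DecidableEq κ]

lemma dual_le {M : Matrix κ κ ℝ} (hsym : Mᵀ = M) (hinv : IsUnit M.det)
    (hpsd : ∀ u, 0 ≤ u ⬝ᵥ M.mulVec u) (v w : κ → ℝ) :
    2 * (v ⬝ᵥ w) - w ⬝ᵥ M.mulVec w ≤ v ⬝ᵥ M⁻¹.mulVec v := by
  set q := M⁻¹.mulVec v with hqdef
  have hq : M.mulVec q = v := by
    rw [hqdef, mulVec_mulVec, Matrix.mul_nonsing_inv _ hinv, one_mulVec]
  have h0 := hpsd (w - q)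
  have hMq : M.mulVec (w - q) = M.mulVec w - v := by rw [mulVec_sub, hq]
  have hqMw : q ⬝ᵥ M.mulVec w = v ⬝ᵥ w := by
    have := dot_transpose M q w
    rw [hsym] at this
    rw [this, hq]
  have hexp : (w - q) ⬝ᵥ M.mulVec (w - q)
      = w ⬝ᵥ M.mulVec w - w ⬝ᵥ v - v ⬝ᵥ w + q ⬝ᵥ v := by
    rw [hMq, sub_dotProduct, dotProduct_sub, dotProduct_sub, hqMw]
    ring
  rw [hexp] at h0
  have hcomm1 : w ⬝ᵥ v = v ⬝ᵥ w := dotProduct_comm _ _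
  have hcomm2 : q ⬝ᵥ v = v ⬝ᵥ q := dotProduct_comm _ _
  rw [hcomm1, hcomm2] at h0
  linarith

lemma dual_eq {M : Matrix κ κ ℝ} (hinv : IsUnit M.det) (v : κ → ℝ) :
    v ⬝ᵥ M⁻¹.mulVec v
      = 2 * (v ⬝ᵥ M⁻¹.mulVec v) - (M⁻¹.mulVec v) ⬝ᵥ M.mulVec (M⁻¹.mulVec v) := by
  have hq : M.mulVec (M⁻¹.mulVec v) = v := by
    rw [mulVec_mulVec, Matrix.mul_nonsing_inv _ hinv, one_mulVec]
  rw [hq, dotProduct_comm (M⁻¹.mulVec v) v]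
  ring

lemma inv_qf_nonneg {M : Matrix κ κ ℝ} (hinv : IsUnit M.det)
    (hpsd : ∀ u, 0 ≤ u ⬝ᵥ M.mulVec u) (v : κ → ℝ) : 0 ≤ v ⬝ᵥ M⁻¹.mulVec v := by
  have hq : M.mulVec (M⁻¹.mulVec v) = v := by
    rw [mulVec_mulVec, Matrix.mul_nonsing_inv _ hinv, one_mulVec]
  calc (0:ℝ) ≤ (M⁻¹.mulVec v) ⬝ᵥ M.mulVec (M⁻¹.mulVec v) := hpsd _
    _ = v ⬝ᵥ M⁻¹.mulVec v := by rw [hq, dotProduct_comm]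

lemma diag_eq (M : Matrix κ κ ℝ) (i : κ) :
    (Pi.single i 1) ⬝ᵥ M.mulVec (Pi.single i 1) = M i i := by
  rw [mulVec_single, single_dotProduct]
  simp

lemma qf_inv_le {S T : Matrix κ κ ℝ} (hSsym : Sᵀ = S)
    (hS : IsUnit S.det) (hT : IsUnit T.det)
    (hSpsd : ∀ u, 0 ≤ u ⬝ᵥ S.mulVec u)
    {c : ℝ} (hc : 0 < c) (hdom : ∀ u, c * (u ⬝ᵥ S.mulVec u) ≤ u ⬝ᵥ T.mulVec u)
    (v : κ → ℝ) : v ⬝ᵥ T⁻¹.mulVec v ≤ c⁻¹ * (v ⬝ᵥ S⁻¹.mulVec v) := by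
  have hde := dual_eq hT v
  have hd := hdom (T⁻¹.mulVec v)
  have h2 := dual_le hSsym hS hSpsd (c⁻¹ • v) (T⁻¹.mulVec v)
  have h3 : (c⁻¹ • v) ⬝ᵥ S⁻¹.mulVec (c⁻¹ • v) = c⁻¹ * (c⁻¹ * (v ⬝ᵥ S⁻¹.mulVec v)) := by
    rw [smul_dotProduct, mulVec_smul, dotProduct_smul, smul_eq_mul, smul_eq_mul]
  have h4 : (c⁻¹ • v) ⬝ᵥ T⁻¹.mulVec v = c⁻¹ * (v ⬝ᵥ T⁻¹.mulVec v) := by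
    rw [smul_dotProduct, smul_eq_mul]
  rw [h3, h4] at h2
  have h5 := mul_le_mul_of_nonneg_left h2 hc.le
  have h6 : c * (2 * (c⁻¹ * (v ⬝ᵥ T⁻¹.mulVec v)) - (T⁻¹.mulVec v) ⬝ᵥ S.mulVec (T⁻¹.mulVec v))
      = 2 * (v ⬝ᵥ T⁻¹.mulVec v) - c * ((T⁻¹.mulVec v) ⬝ᵥ S.mulVec (T⁻¹.mulVec v)) := by
    field_simp
  have h7 : c * (c⁻¹ * (c⁻¹ * (v ⬝ᵥ S⁻¹.mulVec v))) = c⁻¹ * (v ⬝ᵥ S⁻¹.mulVec v) := by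
    field_simp
  rw [h6, h7] at h5
  linarith

lemma trace_inv_le {S T : Matrix κ κ ℝ} (hSsym : Sᵀ = S)
    (hS : IsUnit S.det) (hT : IsUnit T.det)
    (hSpsd : ∀ u, 0 ≤ u ⬝ᵥ S.mulVec u)
    {c : ℝ} (hc : 0 < c) (hdom : ∀ u, c * (u ⬝ᵥ S.mulVec u) ≤ u ⬝ᵥ T.mulVec u) :
    T⁻¹.trace ≤ c⁻¹ * S⁻¹.trace := by
  calc T⁻¹.trace = ∑ i, T⁻¹ i i := rfl
    _ ≤ ∑ i, c⁻¹ * (S⁻¹ i i) := by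
        apply Finset.sum_le_sum
        intro i _
        calc T⁻¹ i i = (Pi.single i 1) ⬝ᵥ T⁻¹.mulVec (Pi.single i 1) := (diag_eq _ _).symm
          _ ≤ c⁻¹ * ((Pi.single i 1) ⬝ᵥ S⁻¹.mulVec (Pi.single i 1)) :=
              qf_inv_le hSsym hS hT hSpsd hc hdom _
          _ = c⁻¹ * S⁻¹ i i := by rw [diag_eq]
    _ = c⁻¹ * S⁻¹.trace := by rw [← Finset.mul_sum]; rfl

lemma trace_inv_nonneg {S : Matrix κ κ ℝ} (hS : IsUnit S.det)
    (hSpsd : ∀ u, 0 ≤ u ⬝ᵥ S.mulVec u) : 0 ≤ S⁻¹.trace := by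
  have h : ∀ i : κ, 0 ≤ S⁻¹ i i := by
    intro i
    have := inv_qf_nonneg hS hSpsd (Pi.single i 1)
    rwa [diag_eq] at this
  exact Finset.sum_nonneg fun i _ => h i

lemma augment_mulVec {n d : ℕ} (X : Matrix (Fin n) (Fin d) ℝ) (Y : Fin n → ℝ)
    (β : Fin d → ℝ) (c : ℝ) :
    (augment X Y).mulVec (Fin.snoc β c) = X.mulVec β + c • Y := by
  funext i
  simp only [augment, mulVec, dotProduct, Matrix.of_apply, Pi.add_apply, Pi.smul_apply,
    smul_eq_mul, Fin.sum_univ_castSucc, Fin.snoc_castSucc, Fin.snoc_last]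
  ring

lemma inj_of_rank {n d : ℕ} {X : Matrix (Fin n) (Fin d) ℝ} (h : X.rank = d) :
    Function.Injective X.mulVec := by
  have hker : LinearMap.ker X.mulVecLin = ⊥ := by
    have h1 := LinearMap.finrank_range_add_finrank_ker X.mulVecLin
    have h2 : Module.finrank ℝ (Fin d → ℝ) = d := by simp
    rw [h2] at h1
    have h3 : Module.finrank ℝ (LinearMap.range X.mulVecLin) = d := h
    have h4 : Module.finrank ℝ (LinearMap.ker X.mulVecLin) = 0 := by omega
    exact Submodule.finrank_eq_zero.mp h4
  exact LinearMap.ker_eq_bot.mp hker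

lemma norm_euc {d : ℕ} (x : EuclideanSpace ℝ (Fin d)) :
    ‖x‖ = Real.sqrt (sqNorm (x : Fin d → ℝ)) := by
  rw [EuclideanSpace.norm_eq]; congr 1; simp [sqNorm, Real.norm_eq_abs, sq_abs]

lemma sqNorm_one_iff {d : ℕ} (x : EuclideanSpace ℝ (Fin d)) :
    sqNorm (x : Fin d → ℝ) = 1 ↔ ‖x‖ = 1 := by
  rw [norm_euc]
  constructor
  · intro h; rw [h, Real.sqrt_one]
  · intro h
    have := congrArg (· ^ 2) h
    simpa [Real.sq_sqrt (sqNorm_nonneg (x : Fin d → ℝ))] using this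

section Sig
variable {n d : ℕ} (X : Matrix (Fin n) (Fin d) ℝ)

def sigSet : Set ℝ := {r : ℝ | ∃ x : Fin d → ℝ, sqNorm x = 1 ∧ r = sqNorm (X.mulVec x)}

lemma sigSet_eq_image :
    sigSet X = (fun x : EuclideanSpace ℝ (Fin d) => sqNorm (X.mulVec (x : Fin d → ℝ))) ''
      (Metric.sphere 0 1) := by
  ext r
  constructor
  · rintro ⟨x, hx1, rfl⟩
    exact ⟨WithLp.toLp 2 x, by simpa [mem_sphere_iff_norm] using (sqNorm_one_iff (WithLp.toLp 2 x)).mp hx1, rfl⟩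
  · rintro ⟨x, hx, rfl⟩
    exact ⟨x, (sqNorm_one_iff x).mpr (by simpa [mem_sphere_iff_norm] using hx), rfl⟩

lemma cont_qf :
    Continuous (fun x : EuclideanSpace ℝ (Fin d) => sqNorm (X.mulVec (x : Fin d → ℝ))) := by
  apply Continuous.comp (g := fun v : Fin d → ℝ => sqNorm (X.mulVec v))
  · unfold sqNorm mulVec dotProduct
    continuity
  · exact PiLp.continuous_ofLp (p := 2) (β := fun _ : Fin d => ℝ)

lemma sphere_pt (hd : 0 < d) :
    ∃ x₀ : EuclideanSpace ℝ (Fin d), x₀ ∈ Metric.sphere (0 : EuclideanSpace ℝ (Fin d)) 1 := by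
  refine ⟨EuclideanSpace.single ⟨0, hd⟩ (1:ℝ), ?_⟩
  simp [mem_sphere_iff_norm, EuclideanSpace.norm_single]

lemma sigSet_nonempty (hd : 0 < d) : (sigSet X).Nonempty := by
  obtain ⟨x₀, hx₀⟩ := sphere_pt hd
  rw [sigSet_eq_image]
  exact ⟨_, Set.mem_image_of_mem _ hx₀⟩

lemma sigSet_bddBelow : BddBelow (sigSet X) :=
  ⟨0, fun r ⟨x, _, hr⟩ => hr ▸ sqNorm_nonneg _⟩

lemma sigSet_bddAbove : BddAbove (sigSet X) := by
  rw [sigSet_eq_image]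
  exact ((isCompact_sphere 0 1).image (cont_qf X)).bddAbove

lemma sigMin_eq : sigMinSq X = sInf (sigSet X) := rfl
lemma sigMax_eq : sigMaxSq X = sSup (sigSet X) := rfl

lemma smin_pos (hd : 0 < d) (hinj : Function.Injective X.mulVec) : 0 < sigMinSq X := by
  obtain ⟨x₀, hx₀⟩ := sphere_pt hd
  obtain ⟨z, hz, hzmin'⟩ := (isCompact_sphere (0 : EuclideanSpace ℝ (Fin d)) 1).exists_isMinOn
    ⟨x₀, hx₀⟩ (cont_qf X).continuousOn
  have hzmin := isMinOn_iff.mp hzmin'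
  have hz1 : sqNorm (z : Fin d → ℝ) = 1 :=
    (sqNorm_one_iff z).mpr (by simpa [mem_sphere_iff_norm] using hz)
  have hXz : X.mulVec (z : Fin d → ℝ) ≠ 0 := by
    intro h0
    have : (z : Fin d → ℝ) = 0 := by
      apply hinj
      rw [h0, mulVec_zero]
    rw [this] at hz1
    simp [sqNorm] at hz1
  have hpos : 0 < sqNorm (X.mulVec (z : Fin d → ℝ)) := sqNorm_pos hXz
  rw [sigMin_eq]
  refine lt_of_lt_of_le hpos (le_csInf (sigSet_nonempty X hd) ?_)
  rintro s ⟨x, hx1, rfl⟩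
  have hmem : (WithLp.equiv 2 (Fin d → ℝ)).symm x
      ∈ Metric.sphere (0 : EuclideanSpace ℝ (Fin d)) 1 := by
    rw [Metric.mem_sphere, dist_eq_norm, sub_zero]
    exact (sqNorm_one_iff _).mp hx1
  exact hzmin _ hmem

lemma smin_le (v : Fin d → ℝ) : sigMinSq X * sqNorm v ≤ sqNorm (X.mulVec v) := by
  by_cases hv : v = 0
  · simp [hv, mulVec_zero, sqNorm_zero]
  · have ht : 0 < sqNorm v := sqNorm_pos hv
    set s := Real.sqrt (sqNorm v) with hs
    have hs0 : 0 < s := Real.sqrt_pos.mpr ht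
    have hs2 : s ^ 2 = sqNorm v := Real.sq_sqrt (le_of_lt ht)
    have hx1 : sqNorm (s⁻¹ • v) = 1 := by
      rw [sqNorm_smul, inv_pow, hs2]
      field_simp
    have hmem : s⁻¹ * s⁻¹ * sqNorm (X.mulVec v) ∈ sigSet X := by
      refine ⟨s⁻¹ • v, hx1, ?_⟩
      rw [mulVec_smul, sqNorm_smul]
      ring_nf
    have hle := csInf_le (sigSet_bddBelow X) hmem
    rw [← sigMin_eq] at hle
    calc sigMinSq X * sqNorm v = sigMinSq X * (s * s) := by rw [← hs2]; ring_nf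
      _ ≤ (s⁻¹ * s⁻¹ * sqNorm (X.mulVec v)) * (s * s) :=
          mul_le_mul_of_nonneg_right hle (by positivity)
      _ = sqNorm (X.mulVec v) := by field_simp

lemma smax_ge (v : Fin d → ℝ) : sqNorm (X.mulVec v) ≤ sigMaxSq X * sqNorm v := by
  by_cases hv : v = 0
  · simp [hv, mulVec_zero, sqNorm_zero]
  · have ht : 0 < sqNorm v := sqNorm_pos hv
    set s := Real.sqrt (sqNorm v) with hs
    have hs0 : 0 < s := Real.sqrt_pos.mpr ht
    have hs2 : s ^ 2 = sqNorm v := Real.sq_sqrt (le_of_lt ht)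
    have hx1 : sqNorm (s⁻¹ • v) = 1 := by
      rw [sqNorm_smul, inv_pow, hs2]
      field_simp
    have hmem : s⁻¹ * s⁻¹ * sqNorm (X.mulVec v) ∈ sigSet X := by
      refine ⟨s⁻¹ • v, hx1, ?_⟩
      rw [mulVec_smul, sqNorm_smul]
      ring_nf
    have hle := le_csSup (sigSet_bddAbove X) hmem
    rw [← sigMax_eq] at hle
    calc sqNorm (X.mulVec v) = (s⁻¹ * s⁻¹ * sqNorm (X.mulVec v)) * (s * s) := by
          field_simp
      _ ≤ sigMaxSq X * (s * s) := mul_le_mul_of_nonneg_right hle (by positivity)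
      _ = sigMaxSq X * sqNorm v := by rw [← hs2]; ring_nf

lemma smin_le_smax (hd : 0 < d) : sigMinSq X ≤ sigMaxSq X :=
  csInf_le_csSup (sigSet_nonempty X hd) (sigSet_bddBelow X) (sigSet_bddAbove X)

end Sig
end Aux

set_option maxHeartbeats 2000000 in
theorem wasserstein_weight_bound {n d k : ℕ} {ε : ℝ} (hε : 0 < ε) (hε' : ε ≤ 1 / 2)
    (X : Matrix (Fin n) (Fin d) ℝ) (hrank : X.rank = d) (Y : Fin n → ℝ)
    (P : Matrix (Fin k) (Fin n) ℝ)
    (hP : IsSubspaceEmbedding P (augment X Y) (ε / 3))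
    (γ ν : Fin d → ℝ)
    (hγ : ∀ β : Fin d → ℝ, sqNorm (X.mulVec γ - Y) ≤ sqNorm (X.mulVec β - Y))
    (hν : ∀ β : Fin d → ℝ,
      sqNorm (P.mulVec (X.mulVec ν - Y)) ≤ sqNorm (P.mulVec (X.mulVec β - Y)))
    (ρ : ℝ) (hρ₀ : 0 < ρ) (hρ₁ : ρ ≤ 1) (hXγ : eNorm (X.mulVec γ) ≥ ρ * eNorm Y) :
    Real.sqrt (sqNorm ν + ((Xᵀ * Pᵀ * P * X)⁻¹).trace) ≤
      (1 + condNum X / ρ * ε) * Real.sqrt (sqNorm γ + ((Xᵀ * X)⁻¹).trace) := by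
  classical
  rcases Nat.eq_zero_or_pos d with hd0 | hd
  · subst hd0
    have h1 : sqNorm ν = 0 := by simp [sqNorm]
    have h2 : sqNorm γ = 0 := by simp [sqNorm]
    have h3 : ((Xᵀ * Pᵀ * P * X)⁻¹).trace = 0 := by
      simp [Matrix.trace]
    have h4 : ((Xᵀ * X)⁻¹).trace = 0 := by simp [Matrix.trace]
    rw [h1, h2, h3, h4]
    simp
  -- main case: 0 < d
  have hinj : Function.Injective X.mulVec := Aux.inj_of_rank hrank
  have hsmin : 0 < sigMinSq X := Aux.smin_pos X hd hinj
  have hsmax : 0 < sigMaxSq X := lt_of_lt_of_le hsmin (Aux.smin_le_smax X hd)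
  have hsqmin : 0 < Real.sqrt (sigMinSq X) := Real.sqrt_pos.mpr hsmin
  have hκ : 1 ≤ condNum X := by
    rw [condNum, le_div_iff₀ hsqmin, one_mul]
    exact Real.sqrt_le_sqrt (Aux.smin_le_smax X hd)
  set c := condNum X / ρ with hcdef
  have hc1 : 1 ≤ c := by
    rw [hcdef, le_div_iff₀ hρ₀, one_mul]
    exact le_trans hρ₁ hκ
  have hc0 : 0 < c := lt_of_lt_of_le one_pos hc1
  have hcε : 0 ≤ c * ε := le_of_lt (mul_pos hc0 hε)
  have hεm : 0 < 1 - ε / 3 := by linarith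
  -- the subspace embedding, specialized
  have hemb : ∀ (β : Fin d → ℝ) (t : ℝ),
      (1 - ε / 3) * sqNorm (X.mulVec β + t • Y) ≤ sqNorm (P.mulVec (X.mulVec β + t • Y)) ∧
        sqNorm (P.mulVec (X.mulVec β + t • Y)) ≤ (1 + ε / 3) * sqNorm (X.mulVec β + t • Y) := by
    intro β t
    have h := hP (Fin.snoc β t)
    have e1 : (P * augment X Y).mulVec (Fin.snoc β t) = P.mulVec (X.mulVec β + t • Y) := by
      rw [← mulVec_mulVec, Aux.augment_mulVec]
    have e2 : (augment X Y).mulVec (Fin.snoc β t) = X.mulVec β + t • Y :=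
      Aux.augment_mulVec X Y β t
    rw [e1, e2] at h
    exact h
  have hembX : ∀ v : Fin d → ℝ,
      (1 - ε / 3) * sqNorm (X.mulVec v) ≤ sqNorm (P.mulVec (X.mulVec v)) ∧
        sqNorm (P.mulVec (X.mulVec v)) ≤ (1 + ε / 3) * sqNorm (X.mulVec v) := by
    intro v
    have h := hemb v 0
    simpa using h
  -- residual and error
  set e := ν - γ with hedef
  set r := Y - X.mulVec γ with hrdef
  have hrr : r = -(X.mulVec γ - Y) := by rw [hrdef]; abel
  have horthXe : X.mulVec e ⬝ᵥ r = 0 := by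
    have h := Aux.normal_eq hγ e
    rw [hrr, dotProduct_neg, h, neg_zero]
  have horthXγ : X.mulVec γ ⬝ᵥ r = 0 := by
    have h := Aux.normal_eq hγ γ
    rw [hrr, dotProduct_neg, h, neg_zero]
  have hν' : ∀ β : Fin d → ℝ, sqNorm ((P * X).mulVec ν - P.mulVec Y)
      ≤ sqNorm ((P * X).mulVec β - P.mulVec Y) := by
    intro β
    have h := hν β
    have e1 : ∀ w : Fin d → ℝ, P.mulVec (X.mulVec w - Y) = (P * X).mulVec w - P.mulVec Y := by
      intro w; rw [mulVec_sub, mulVec_mulVec]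
    rw [e1 ν, e1 β] at h
    exact h
  have hXνY : X.mulVec ν - Y = X.mulVec e - r := by
    rw [hedef, mulVec_sub, hrdef]; abel
  have hsketch : sqNorm (P.mulVec (X.mulVec e)) = P.mulVec (X.mulVec e) ⬝ᵥ P.mulVec r := by
    have h := Aux.normal_eq hν' e
    have e2 : (P * X).mulVec e = P.mulVec (X.mulVec e) := (mulVec_mulVec _ _ _).symm
    have e3 : (P * X).mulVec ν - P.mulVec Y = P.mulVec (X.mulVec e) - P.mulVec r := by
      rw [← mulVec_mulVec, ← mulVec_sub, hXνY, mulVec_sub]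
    rw [e2, e3, dotProduct_sub] at h
    rw [Aux.sqNorm_eq_dot]
    linarith
  -- key inequality, for every positive scaling s
  have hkey : ∀ s : ℝ, 0 < s →
      s * ((1 - ε / 3) * sqNorm (X.mulVec e))
        ≤ ε / 3 / 2 * (s ^ 2 * sqNorm (X.mulVec e) + sqNorm r) := by
    intro s hs
    have hu1 : X.mulVec (s • e - γ) + (1 : ℝ) • Y = s • X.mulVec e + r := by
      rw [mulVec_sub, mulVec_smul, one_smul, hrdef]; abel
    have hu2 : X.mulVec (s • e + γ) + (-1 : ℝ) • Y = s • X.mulVec e - r := by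
      rw [mulVec_add, mulVec_smul, neg_one_smul, hrdef]; abel
    have hup := (hemb (s • e - γ) 1).2
    have hdown := (hemb (s • e + γ) (-1)).1
    rw [hu1] at hup
    rw [hu2] at hdown
    have hor : (s • X.mulVec e) ⬝ᵥ r = 0 := by rw [smul_dotProduct, horthXe, smul_zero]
    have hq1 : sqNorm (s • X.mulVec e + r) = s ^ 2 * sqNorm (X.mulVec e) + sqNorm r := by
      rw [Aux.sqNorm_add, Aux.sqNorm_smul, hor]; ring
    have hq2 : sqNorm (s • X.mulVec e - r) = s ^ 2 * sqNorm (X.mulVec e) + sqNorm r := by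
      rw [sub_eq_add_neg, Aux.sqNorm_add, Aux.sqNorm_smul, Aux.sqNorm_neg, dotProduct_neg,
        hor]; ring
    have hp1 : P.mulVec (s • X.mulVec e + r) = s • P.mulVec (X.mulVec e) + P.mulVec r := by
      rw [mulVec_add, mulVec_smul]
    have hp2 : P.mulVec (s • X.mulVec e - r) = s • P.mulVec (X.mulVec e) - P.mulVec r := by
      rw [mulVec_sub, mulVec_smul]
    have hq3 : sqNorm (s • P.mulVec (X.mulVec e) + P.mulVec r)
        = s ^ 2 * sqNorm (P.mulVec (X.mulVec e))
          + 2 * s * (P.mulVec (X.mulVec e) ⬝ᵥ P.mulVec r) + sqNorm (P.mulVec r) := by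
      rw [Aux.sqNorm_add, Aux.sqNorm_smul, smul_dotProduct, smul_eq_mul]; ring
    have hq4 : sqNorm (s • P.mulVec (X.mulVec e) - P.mulVec r)
        = s ^ 2 * sqNorm (P.mulVec (X.mulVec e))
          - 2 * s * (P.mulVec (X.mulVec e) ⬝ᵥ P.mulVec r) + sqNorm (P.mulVec r) := by
      rw [sub_eq_add_neg, Aux.sqNorm_add, Aux.sqNorm_smul, Aux.sqNorm_neg, dotProduct_neg,
        smul_dotProduct, smul_eq_mul]; ring
    rw [hp1, hq3, hq1] at hup
    rw [hp2, hq4, hq2] at hdown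
    have hlow := (hembX e).1
    have hsD : s * (P.mulVec (X.mulVec e) ⬝ᵥ P.mulVec r)
        = s * sqNorm (P.mulVec (X.mulVec e)) := by rw [← hsketch]
    have hmul := mul_le_mul_of_nonneg_left hlow hs.le
    nlinarith [hup, hdown, hsD, hmul]
  -- step 1 : (1-ε/3) ‖Xe‖ ≤ (ε/3) ‖r‖
  have step1 : (1 - ε / 3) * Real.sqrt (sqNorm (X.mulVec e))
      ≤ ε / 3 * Real.sqrt (sqNorm r) := by
    have hA2nn : 0 ≤ sqNorm (X.mulVec e) := Aux.sqNorm_nonneg _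
    have hR2nn : 0 ≤ sqNorm r := Aux.sqNorm_nonneg _
    rcases eq_or_lt_of_le hA2nn with hA0 | hA0
    · rw [← hA0, Real.sqrt_zero, mul_zero]
      exact mul_nonneg (by linarith) (Real.sqrt_nonneg _)
    · rcases eq_or_lt_of_le hR2nn with hR0 | hR0
      · exfalso
        have hεp : 0 < ε / 3 := by linarith
        have hs0 : 0 < (1 - ε / 3) / (ε / 3) := by positivity
        have h := hkey _ hs0
        rw [← hR0] at h
        have hrw : ε / 3 / 2 * (((1 - ε / 3) / (ε / 3)) ^ 2 * sqNorm (X.mulVec e) + 0)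
            = (1 - ε / 3) / (ε / 3) * ((1 - ε / 3) * sqNorm (X.mulVec e)) / 2 := by
          field_simp; ring
        rw [hrw] at h
        nlinarith [mul_pos hs0 (mul_pos hεm hA0)]
      · obtain ⟨A, hAdef⟩ : ∃ a, Real.sqrt (sqNorm (X.mulVec e)) = a := ⟨_, rfl⟩
        obtain ⟨R, hRdef⟩ : ∃ a, Real.sqrt (sqNorm r) = a := ⟨_, rfl⟩
        rw [hAdef, hRdef]
        have hsa : 0 < A := hAdef ▸ Real.sqrt_pos.mpr hA0
        have hsr : 0 < R := hRdef ▸ Real.sqrt_pos.mpr hR0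
        have hs : 0 < R / A := div_pos hsr hsa
        have h := hkey _ hs
        have hAA : A * A = sqNorm (X.mulVec e) := by
          rw [← hAdef]; exact Real.mul_self_sqrt hA2nn
        have hRR : R * R = sqNorm r := by
          rw [← hRdef]; exact Real.mul_self_sqrt hR2nn
        rw [← hAA, ← hRR] at h
        have hAne : A ≠ 0 := ne_of_gt hsa
        have hdiv1 : R / A * ((1 - ε / 3) * (A * A)) = (1 - ε / 3) * (R * A) := by
          field_simp
        have hdiv2 : (R / A) ^ 2 * (A * A) = R * R := by
          field_simp
        rw [hdiv1, hdiv2] at h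
        nlinarith [h, hsr, hsa]
  -- step 2 : ‖r‖ ≤ (1/ρ) ‖Xγ‖
  have step2 : Real.sqrt (sqNorm r) ≤ (1 / ρ) * eNorm (X.mulVec γ) := by
    have hY : Y = X.mulVec γ + r := by rw [hrdef]; abel
    have hYdec : sqNorm Y = sqNorm (X.mulVec γ) + sqNorm r := by
      calc sqNorm Y = sqNorm (X.mulVec γ + r) := by rw [← hY]
        _ = sqNorm (X.mulVec γ) + 2 * (X.mulVec γ ⬝ᵥ r) + sqNorm r := Aux.sqNorm_add _ _
        _ = sqNorm (X.mulVec γ) + sqNorm r := by rw [horthXγ]; ring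
    have hR2le : sqNorm r ≤ sqNorm Y := by
      have := Aux.sqNorm_nonneg (X.mulVec γ); linarith
    have hEY : eNorm Y ≤ eNorm (X.mulVec γ) / ρ := by
      rw [le_div_iff₀ hρ₀]
      calc eNorm Y * ρ = ρ * eNorm Y := by ring
        _ ≤ eNorm (X.mulVec γ) := hXγ
    calc Real.sqrt (sqNorm r) ≤ Real.sqrt (sqNorm Y) := Real.sqrt_le_sqrt hR2le
      _ = eNorm Y := rfl
      _ ≤ eNorm (X.mulVec γ) / ρ := hEY
      _ = (1 / ρ) * eNorm (X.mulVec γ) := by ring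
  -- step 3 : ‖Xγ‖ ≤ σmax ‖γ‖
  have step3 : eNorm (X.mulVec γ) ≤ Real.sqrt (sigMaxSq X) * eNorm γ := by
    have h := Aux.smax_ge X γ
    calc eNorm (X.mulVec γ) = Real.sqrt (sqNorm (X.mulVec γ)) := rfl
      _ ≤ Real.sqrt (sigMaxSq X * sqNorm γ) := Real.sqrt_le_sqrt h
      _ = Real.sqrt (sigMaxSq X) * eNorm γ := by rw [Real.sqrt_mul hsmax.le]; rfl
  -- step 4 : σmin ‖e‖ ≤ ‖Xe‖
  have step4 : Real.sqrt (sigMinSq X) * eNorm e ≤ Real.sqrt (sqNorm (X.mulVec e)) := by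
    have h := Aux.smin_le X e
    calc Real.sqrt (sigMinSq X) * eNorm e = Real.sqrt (sigMinSq X * sqNorm e) := by
          rw [Real.sqrt_mul hsmin.le]; rfl
      _ ≤ Real.sqrt (sqNorm (X.mulVec e)) := Real.sqrt_le_sqrt h
  -- combine : ‖e‖ ≤ c ε ‖γ‖
  have hne : eNorm e ≤ c * ε * eNorm γ := by
    have h1 : (1 - ε / 3) * (Real.sqrt (sigMinSq X) * eNorm e)
        ≤ ε / 3 * ((1 / ρ) * (Real.sqrt (sigMaxSq X) * eNorm γ)) := by
      calc (1 - ε / 3) * (Real.sqrt (sigMinSq X) * eNorm e)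
          ≤ (1 - ε / 3) * Real.sqrt (sqNorm (X.mulVec e)) :=
            mul_le_mul_of_nonneg_left step4 hεm.le
        _ ≤ ε / 3 * Real.sqrt (sqNorm r) := step1
        _ ≤ ε / 3 * ((1 / ρ) * eNorm (X.mulVec γ)) :=
            mul_le_mul_of_nonneg_left step2 (by linarith)
        _ ≤ ε / 3 * ((1 / ρ) * (Real.sqrt (sigMaxSq X) * eNorm γ)) := by
            apply mul_le_mul_of_nonneg_left _ (by linarith : (0:ℝ) ≤ ε / 3)
            apply mul_le_mul_of_nonneg_left step3 (by positivity)
    have hcond : condNum X * Real.sqrt (sigMinSq X) = Real.sqrt (sigMaxSq X) := by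
      rw [condNum, div_mul_cancel₀ _ (ne_of_gt hsqmin)]
    have h2 : (1 - ε / 3) * eNorm e ≤ ε / 3 * ((1 / ρ) * (condNum X * eNorm γ)) := by
      apply le_of_mul_le_mul_right _ hsqmin
      calc (1 - ε / 3) * eNorm e * Real.sqrt (sigMinSq X)
          = (1 - ε / 3) * (Real.sqrt (sigMinSq X) * eNorm e) := by ring
        _ ≤ ε / 3 * ((1 / ρ) * (Real.sqrt (sigMaxSq X) * eNorm γ)) := h1
        _ = ε / 3 * ((1 / ρ) * (condNum X * eNorm γ)) * Real.sqrt (sigMinSq X) := by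
            rw [← hcond]; ring
    have hκ0 : 0 < condNum X := lt_of_lt_of_le one_pos hκ
    have hG : 0 ≤ eNorm γ := Aux.eNorm_nonneg γ
    have hE : 0 ≤ eNorm e := Aux.eNorm_nonneg e
    have hcεG : c * ε * eNorm γ = ε * ((1 / ρ) * (condNum X * eNorm γ)) := by
      rw [hcdef]; field_simp
    rw [hcεG]
    have hKG : 0 ≤ (1 / ρ) * (condNum X * eNorm γ) := by positivity
    nlinarith [h2, hKG, hE, hε]
  -- mean bound
  have hν_bound : eNorm ν ≤ (1 + c * ε) * eNorm γ := by
    have hνeq : ν = γ + e := by rw [hedef]; abel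
    calc eNorm ν = eNorm (γ + e) := by rw [← hνeq]
      _ ≤ eNorm γ + eNorm e := Aux.eNorm_add γ e
      _ ≤ eNorm γ + c * ε * eNorm γ := by linarith [hne]
      _ = (1 + c * ε) * eNorm γ := by ring
  have hν2 : sqNorm ν ≤ (1 + c * ε) ^ 2 * sqNorm γ := by
    have h := mul_self_le_mul_self (Aux.eNorm_nonneg ν) hν_bound
    nlinarith [Aux.sq_eNorm ν, Aux.sq_eNorm γ]
  -- trace bound
  have hSsym : (Xᵀ * X)ᵀ = Xᵀ * X := by rw [transpose_mul, transpose_transpose]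
  have qfS : ∀ u : Fin d → ℝ, u ⬝ᵥ (Xᵀ * X).mulVec u = sqNorm (X.mulVec u) := by
    intro u
    rw [← mulVec_mulVec, Aux.dot_transpose, ← Aux.sqNorm_eq_dot]
  have qfT : ∀ u : Fin d → ℝ,
      u ⬝ᵥ (Xᵀ * Pᵀ * P * X).mulVec u = sqNorm (P.mulVec (X.mulVec u)) := by
    intro u
    rw [← mulVec_mulVec, ← mulVec_mulVec, ← mulVec_mulVec, Aux.dot_transpose,
      Aux.dot_transpose, ← Aux.sqNorm_eq_dot]
  have hSpsd : ∀ u, 0 ≤ u ⬝ᵥ (Xᵀ * X).mulVec u := fun u => by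
    rw [qfS]; exact Aux.sqNorm_nonneg _
  have hSinj : Function.Injective (Xᵀ * X).mulVec := by
    intro v w hvw
    have h0 : (Xᵀ * X).mulVec (v - w) = 0 := by rw [mulVec_sub, hvw, sub_self]
    have h1 : sqNorm (X.mulVec (v - w)) = 0 := by
      rw [← qfS, h0, dotProduct_zero]
    have h2 : X.mulVec (v - w) = 0 := Aux.sqNorm_eq_zero h1
    have h3 : v - w = 0 := by
      apply hinj; rw [h2, mulVec_zero]
    exact sub_eq_zero.mp h3
  have hSunit : IsUnit (Xᵀ * X).det :=
    (Matrix.isUnit_iff_isUnit_det _).mp (Matrix.mulVec_injective_iff_isUnit.mp hSinj)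
  have hTinj : Function.Injective (Xᵀ * Pᵀ * P * X).mulVec := by
    intro v w hvw
    have h0 : (Xᵀ * Pᵀ * P * X).mulVec (v - w) = 0 := by rw [mulVec_sub, hvw, sub_self]
    have h1 : sqNorm (P.mulVec (X.mulVec (v - w))) = 0 := by
      rw [← qfT, h0, dotProduct_zero]
    have h2 := (hembX (v - w)).1
    rw [h1] at h2
    have h3 : sqNorm (X.mulVec (v - w)) = 0 := by
      nlinarith [Aux.sqNorm_nonneg (X.mulVec (v - w))]
    have h4 : X.mulVec (v - w) = 0 := Aux.sqNorm_eq_zero h3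
    have h5 : v - w = 0 := by
      apply hinj; rw [h4, mulVec_zero]
    exact sub_eq_zero.mp h5
  have hTunit : IsUnit (Xᵀ * Pᵀ * P * X).det :=
    (Matrix.isUnit_iff_isUnit_det _).mp (Matrix.mulVec_injective_iff_isUnit.mp hTinj)
  have hdom : ∀ u, (1 - ε / 3) * (u ⬝ᵥ (Xᵀ * X).mulVec u)
      ≤ u ⬝ᵥ (Xᵀ * Pᵀ * P * X).mulVec u := by
    intro u
    rw [qfS, qfT]
    exact (hembX u).1
  have htr := Aux.trace_inv_le hSsym hSunit hTunit hSpsd hεm hdom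
  have htrS := Aux.trace_inv_nonneg hSunit hSpsd
  have hfac : (1 - ε / 3)⁻¹ ≤ (1 + c * ε) ^ 2 := by
    have hcc : ε ≤ c * ε := by nlinarith
    apply le_of_mul_le_mul_right _ hεm
    rw [inv_mul_cancel₀ (ne_of_gt hεm)]
    nlinarith [sq_nonneg (c * ε), hcc, hε, hε']
  have htr2 : ((Xᵀ * Pᵀ * P * X)⁻¹).trace
      ≤ (1 + c * ε) ^ 2 * ((Xᵀ * X)⁻¹).trace := by
    calc ((Xᵀ * Pᵀ * P * X)⁻¹).trace ≤ (1 - ε / 3)⁻¹ * ((Xᵀ * X)⁻¹).trace := htr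
      _ ≤ (1 + c * ε) ^ 2 * ((Xᵀ * X)⁻¹).trace := mul_le_mul_of_nonneg_right hfac htrS
  have hsum : sqNorm ν + ((Xᵀ * Pᵀ * P * X)⁻¹).trace
      ≤ (1 + c * ε) ^ 2 * (sqNorm γ + ((Xᵀ * X)⁻¹).trace) := by
    rw [mul_add]
    exact add_le_add hν2 htr2
  have h1cε : 0 ≤ 1 + c * ε := by linarith
  calc Real.sqrt (sqNorm ν + ((Xᵀ * Pᵀ * P * X)⁻¹).trace)
      ≤ Real.sqrt ((1 + c * ε) ^ 2 * (sqNorm γ + ((Xᵀ * X)⁻¹).trace)) :=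
        Real.sqrt_le_sqrt hsum
    _ = (1 + c * ε) * Real.sqrt (sqNorm γ + ((Xᵀ * X)⁻¹).trace) := by
        rw [Real.sqrt_mul (sq_nonneg _), Real.sqrt_sq h1cε]
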